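/- For all p in the open interval (0,1), the derivative of t3(p) = 4(4 + 3p + 9p²)/(3(1 + 3p + p² + p³ − 6p⁴)) satisfies t3′(p) = 4(3p − 1)(9 + 17p + 39p² + 27p³ + 36p⁴) / (3(−6p⁴ + p³ + p² + 3p + 1)²). Consequently t3 is strictly decreasing on (0,1/3) and strictly increasing on (1/3,1). -/

import Mathlib

lemma den_pos {p : ℝ} (hp : p ∈ Set.Ioo (0:ℝ) 1) :
    0 < 1 + 3 * p + p ^ 2 + p ^ 3 - 6 * p ^ 4 := by
  obtain ⟨h0, h1⟩ := hp
  nlinarith [mul_pos (sub_pos.2 h1)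
    (show (0:ℝ) < 6 * p ^ 3 + 5 * p ^ 2 + 4 * p + 1 by positivity)]

lemma hderiv (t3 : ℝ → ℝ)
    (ht3 : ∀ p, t3 p = 4 * (4 + 3 * p + 9 * p ^ 2) /
      (3 * (1 + 3 * p + p ^ 2 + p ^ 3 - 6 * p ^ 4))) :
    ∀ p ∈ Set.Ioo (0 : ℝ) 1,
      HasDerivAt t3
        (4 * (3 * p - 1) * (9 + 17 * p + 39 * p ^ 2 + 27 * p ^ 3 + 36 * p ^ 4) /
          (3 * (-6 * p ^ 4 + p ^ 3 + p ^ 2 + 3 * p + 1) ^ 2)) p := by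
  intro p hp
  have hd := den_pos hp
  have hd' : (3 : ℝ) * (1 + 3 * p + p ^ 2 + p ^ 3 - 6 * p ^ 4) ≠ 0 := by positivity
  have hid := hasDerivAt_id p
  have h1 : HasDerivAt (fun x : ℝ => 4 * (4 + 3 * x + 9 * x ^ 2))
      (4 * (3 * 1 + 9 * (2 * p ^ 1))) p := by
    exact (((hid.const_mul 3).const_add 4).add ((hasDerivAt_pow 2 p).const_mul 9)).const_mul 4
  have h2 : HasDerivAt (fun x : ℝ => 3 * (1 + 3 * x + x ^ 2 + x ^ 3 - 6 * x ^ 4))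
      (3 * (3 * 1 + 2 * p ^ 1 + 3 * p ^ 2 - 6 * (4 * p ^ 3))) p := by
    exact (((((hid.const_mul 3).const_add 1).add (hasDerivAt_pow 2 p)).add
      (hasDerivAt_pow 3 p)).sub ((hasDerivAt_pow 4 p).const_mul 6)).const_mul 3
  have h := h1.div h2 hd'
  have heq : t3 = fun x : ℝ => 4 * (4 + 3 * x + 9 * x ^ 2) /
      (3 * (1 + 3 * x + x ^ 2 + x ^ 3 - 6 * x ^ 4)) := funext ht3
  rw [heq]
  refine h.congr_deriv ?_
  have hD : (1 + 3 * p + p ^ 2 + p ^ 3 - 6 * p ^ 4) ≠ 0 := ne_of_gt hd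
  have hD2 : (-6 * p ^ 4 + p ^ 3 + p ^ 2 + 3 * p + 1) ≠ 0 := by
    intro h; exact hD (by linarith)
  rw [div_eq_div_iff (by positivity) (by positivity)]
  ring

theorem gathering_C3_t3_deriv
    (t3 : ℝ → ℝ)
    (ht3 : ∀ p, t3 p = 4 * (4 + 3 * p + 9 * p ^ 2) /
      (3 * (1 + 3 * p + p ^ 2 + p ^ 3 - 6 * p ^ 4))) :
    (∀ p ∈ Set.Ioo (0 : ℝ) 1,
      HasDerivAt t3
        (4 * (3 * p - 1) * (9 + 17 * p + 39 * p ^ 2 + 27 * p ^ 3 + 36 * p ^ 4) /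
          (3 * (-6 * p ^ 4 + p ^ 3 + p ^ 2 + 3 * p + 1) ^ 2)) p) ∧
    StrictAntiOn t3 (Set.Ioo (0 : ℝ) (1 / 3)) ∧
    StrictMonoOn t3 (Set.Ioo (1 / 3 : ℝ) 1) := by
  have hder := hderiv t3 ht3
  refine ⟨hder, ?_, ?_⟩
  · apply strictAntiOn_of_deriv_neg (convex_Ioo _ _)
    · intro x hx
      have hx' : x ∈ Set.Ioo (0:ℝ) 1 := ⟨hx.1, lt_trans hx.2 (by norm_num)⟩
      exact (hder x hx').differentiableAt.continuousAt.continuousWithinAt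
    · intro x hx
      rw [interior_Ioo] at hx
      have hx' : x ∈ Set.Ioo (0:ℝ) 1 := ⟨hx.1, lt_trans hx.2 (by norm_num)⟩
      rw [(hder x hx').deriv]
      apply div_neg_of_neg_of_pos
      · have h1 : 3 * x - 1 < 0 := by linarith [hx.2]
        have h2 : (0:ℝ) < 9 + 17 * x + 39 * x ^ 2 + 27 * x ^ 3 + 36 * x ^ 4 := by
          nlinarith [hx.1, pow_pos hx'.1 2, pow_pos hx'.1 3, pow_pos hx'.1 4]
        nlinarith
      · have := den_pos hx'
        have hne : (-6 * x ^ 4 + x ^ 3 + x ^ 2 + 3 * x + 1) ≠ 0 := by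
          intro h; nlinarith
        have := pow_two_pos_of_ne_zero hne
        linarith
  · apply strictMonoOn_of_deriv_pos (convex_Ioo _ _)
    · intro x hx
      have hx' : x ∈ Set.Ioo (0:ℝ) 1 := ⟨lt_trans (by norm_num) hx.1, hx.2⟩
      exact (hder x hx').differentiableAt.continuousAt.continuousWithinAt
    · intro x hx
      rw [interior_Ioo] at hx
      have hx' : x ∈ Set.Ioo (0:ℝ) 1 := ⟨lt_trans (by norm_num) hx.1, hx.2⟩
      rw [(hder x hx').deriv]
      apply div_pos
      · have h1 : 0 < 3 * x - 1 := by linarith [hx.1]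
        have h2 : (0:ℝ) < 9 + 17 * x + 39 * x ^ 2 + 27 * x ^ 3 + 36 * x ^ 4 := by
          nlinarith [hx.1, pow_pos hx'.1 2, pow_pos hx'.1 3, pow_pos hx'.1 4]
        nlinarith
      · have := den_pos hx'
        have hne : (-6 * x ^ 4 + x ^ 3 + x ^ 2 + 3 * x + 1) ≠ 0 := by
          intro h; nlinarith
        have := pow_two_pos_of_ne_zero hne
        linarith
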